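/- With A·1 = 0, β = −min_{ij}(A^T A)_{ij}, W = Ã^T Ã where Ã = [√β·1^T; A], the matrix W is entrywise nonnegative, its degree matrix is diag(W·1) = βn·I, and the Laplacian L = βn·I − Ã^T Ã is positive semidefinite; consequently βn ≥ σ_1², where σ_1 is the largest singular value of A. -/

import Mathlib

open Matrix Finset

/-- With `A·1 = 0`, `β = −min_{ij}(Aᵀ A)_{ij}`, and
`W = Ãᵀ Ã` for the augmented data `Ã = [√β·1ᵀ; A]`, the matrix `W` is
entrywise nonnegative, its degree matrix is `β n · I`, the Laplacian
`L = β n · I − Ãᵀ Ã` is positive semidefinite, and consequently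
`β n ≥ σ₁²` for the largest singular value `σ₁` of `A`. -/
theorem augmented_gram_laplacian
    (p n m : ℕ) (hn : 0 < n) (hm : 0 < m)
    (A : Matrix (Fin p) (Fin n) ℝ)
    (hmean : A *ᵥ (fun _ => (1 : ℝ)) = 0)
    (U : Matrix (Fin p) (Fin m) ℝ) (σ : Fin m → ℝ)
    (V : Matrix (Fin m) (Fin n) ℝ)
    (hA : A = U * Matrix.diagonal σ * V)
    (hU : Uᵀ * U = 1) (hV : V * Vᵀ = 1)
    (hσpos : ∀ i, 0 < σ i) (hσdesc : ∀ i j : Fin m, i ≤ j → σ j ≤ σ i)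
    (β : ℝ)
    (hβ1 : ∀ i j, -β ≤ (Aᵀ * A) i j)
    (hβ2 : ∃ i j, (Aᵀ * A) i j = -β)
    (Atil : Matrix (Fin (p + 1)) (Fin n) ℝ)
    (hAtil : Atil = Matrix.of (fun i j =>
      Fin.cases (Real.sqrt β) (fun i' => A i' j) i))
    (W : Matrix (Fin n) (Fin n) ℝ) (hW : W = Atilᵀ * Atil) :
    (∀ i j, 0 ≤ W i j) ∧
    (∀ i, ∑ j, W i j = β * n) ∧
    ((β * n) • (1 : Matrix (Fin n) (Fin n) ℝ) - Atilᵀ * Atil).PosSemidef ∧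
    (σ ⟨0, hm⟩) ^ 2 ≤ β * n := by
  -- row sums of AᵀA vanish
  have hrow0 : ∀ i : Fin n, ∑ j, (Aᵀ * A) i j = 0 := by
    intro i
    have h : (Aᵀ * A) *ᵥ (fun _ => (1:ℝ)) = 0 := by
      rw [← Matrix.mulVec_mulVec, hmean, Matrix.mulVec_zero]
    have := congrFun h i
    simpa [Matrix.mulVec, dotProduct] using this
  -- β ≥ 0
  have hβ0 : 0 ≤ β := by
    obtain ⟨i, j, hij⟩ := hβ2
    have hsum : (n : ℝ) * (-β) ≤ ∑ j, (Aᵀ * A) i j := by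
      calc (n : ℝ) * (-β) = ∑ _j : Fin n, (-β) := by simp [mul_comm]
        _ ≤ ∑ j, (Aᵀ * A) i j := Finset.sum_le_sum (fun j _ => hβ1 i j)
    rw [hrow0 i] at hsum
    have hnp : (0:ℝ) < n := by exact_mod_cast hn
    nlinarith [hsum, hnp]
  -- entries of W
  have hWent : ∀ i j, W i j = β + (Aᵀ * A) i j := by
    intro i j
    rw [hW, hAtil]
    simp only [Matrix.mul_apply, Matrix.transpose_apply, Matrix.of_apply]
    rw [Fin.sum_univ_succ]
    simp [Real.mul_self_sqrt hβ0, Matrix.mul_apply]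
  have hWnn : ∀ i j, 0 ≤ W i j := by
    intro i j
    rw [hWent]
    linarith [hβ1 i j]
  have hWrow : ∀ i, ∑ j, W i j = β * n := by
    intro i
    simp only [hWent]
    rw [Finset.sum_add_distrib, hrow0 i]
    simp [mul_comm]
  have hWsym : ∀ i j, W i j = W j i := by
    intro i j
    simp only [hWent, Matrix.mul_apply, Matrix.transpose_apply]
    congr 1
    exact Finset.sum_congr rfl (fun k _ => mul_comm _ _)
  -- the quadratic form of the Laplacian
  have hquad : ∀ x : Fin n → ℝ,
      0 ≤ β * n * (∑ i, x i * x i) - ∑ i, x i * ∑ j, W i j * x j := by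
    intro x
    have key : ∑ i, ∑ j, W i j * (x i - x j)^2
        = 2 * (β * n * (∑ i, x i * x i)) - 2 * ∑ i, x i * ∑ j, W i j * x j := by
      have e1 : ∀ i j : Fin n, W i j * (x i - x j)^2
          = W i j * (x i * x i) + W i j * (x j * x j) - 2 * (x i * (W i j * x j)) := by
        intro i j; ring
      calc ∑ i, ∑ j, W i j * (x i - x j)^2
          = ∑ i, ∑ j, (W i j * (x i * x i) + W i j * (x j * x j)
              - 2 * (x i * (W i j * x j))) := by
            exact Finset.sum_congr rfl fun i _ => Finset.sum_congr rfl fun j _ => e1 i j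
        _ = (∑ i, ∑ j, W i j * (x i * x i)) + (∑ i, ∑ j, W i j * (x j * x j))
              - 2 * ∑ i, x i * ∑ j, W i j * x j := by
            simp [Finset.sum_add_distrib, Finset.sum_sub_distrib, Finset.mul_sum]
        _ = 2 * (β * n * (∑ i, x i * x i)) - 2 * ∑ i, x i * ∑ j, W i j * x j := by
            have hA1 : (∑ i, ∑ j, W i j * (x i * x i)) = β * n * (∑ i, x i * x i) := by
              rw [Finset.mul_sum]
              refine Finset.sum_congr rfl fun i _ => ?_
              rw [← Finset.sum_mul, hWrow i]
            have hA2 : (∑ i, ∑ j, W i j * (x j * x j)) = β * n * (∑ i, x i * x i) := by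
              rw [Finset.sum_comm, Finset.mul_sum]
              refine Finset.sum_congr rfl fun j _ => ?_
              have : ∑ i, W i j = β * n := by
                rw [show (∑ i, W i j) = ∑ i, W j i from
                  Finset.sum_congr rfl fun i _ => hWsym i j, hWrow j]
              rw [← Finset.sum_mul, this]
            rw [hA1, hA2]; ring
    have hnn : 0 ≤ ∑ i, ∑ j, W i j * (x i - x j)^2 :=
      Finset.sum_nonneg fun i _ => Finset.sum_nonneg fun j _ =>
        mul_nonneg (hWnn i j) (sq_nonneg _)
    linarith [key ▸ hnn]
  -- PSD of the Laplacian
  have hL : ((β * n) • (1 : Matrix (Fin n) (Fin n) ℝ) - Atilᵀ * Atil).PosSemidef := by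
    rw [Matrix.posSemidef_iff_dotProduct_mulVec]
    constructor
    · have h1 : (Atilᵀ * Atil).IsHermitian := Matrix.isHermitian_conjTranspose_mul_self Atil
      have h2 : ((β * n) • (1 : Matrix (Fin n) (Fin n) ℝ)).IsHermitian := by
        simp [Matrix.IsHermitian, Matrix.conjTranspose_smul]
      exact h2.sub h1
    · intro x
      have := hquad x
      have hdot : star x ⬝ᵥ (((β * n) • (1 : Matrix (Fin n) (Fin n) ℝ) - Atilᵀ * Atil) *ᵥ x)
          = β * n * (∑ i, x i * x i) - ∑ i, x i * ∑ j, W i j * x j := by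
        rw [Matrix.sub_mulVec, dotProduct_sub, Matrix.smul_mulVec,
          Matrix.one_mulVec, ← hW]
        simp [dotProduct, Matrix.mulVec, dotProduct_smul,
          Finset.mul_sum, mul_assoc, mul_left_comm]
      rw [hdot]
      exact this
  refine ⟨hWnn, hWrow, hL, ?_⟩
  -- the singular value bound
  set i0 : Fin m := ⟨0, hm⟩
  set e : Fin m → ℝ := Pi.single i0 1 with he
  set x : Fin n → ℝ := Vᵀ *ᵥ e with hx
  have hAtA : Aᵀ * A = Vᵀ * Matrix.diagonal (fun i => σ i * σ i) * V := by
    rw [hA]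
    have : (U * Matrix.diagonal σ * V)ᵀ = Vᵀ * Matrix.diagonal σ * Uᵀ := by
      simp [Matrix.transpose_mul, Matrix.diagonal_transpose, Matrix.mul_assoc]
    rw [this]
    calc Vᵀ * Matrix.diagonal σ * Uᵀ * (U * Matrix.diagonal σ * V)
        = Vᵀ * Matrix.diagonal σ * (Uᵀ * U) * Matrix.diagonal σ * V := by
          simp only [Matrix.mul_assoc]
      _ = Vᵀ * Matrix.diagonal (fun i => σ i * σ i) * V := by
          rw [hU]
          simp [Matrix.mul_assoc, Matrix.diagonal_mul_diagonal]
  have hVVt : x ᵥ* Vᵀ = e := by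
    rw [hx, Matrix.mulVec_transpose, Matrix.vecMul_vecMul, hV, Matrix.vecMul_one]
  -- norm of x
  have hxx : x ⬝ᵥ x = 1 := by
    nth_rewrite 2 [hx]
    rw [Matrix.dotProduct_mulVec, hVVt]
    simp [he]
  -- quadratic form of AᵀA at x
  have hxAx : x ⬝ᵥ ((Aᵀ * A) *ᵥ x) = σ i0 * σ i0 := by
    have hmm : Vᵀ * Matrix.diagonal (fun i => σ i * σ i) * V * Vᵀ
        = Vᵀ * Matrix.diagonal (fun i => σ i * σ i) := by
      calc Vᵀ * Matrix.diagonal (fun i => σ i * σ i) * V * Vᵀ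
          = Vᵀ * Matrix.diagonal (fun i => σ i * σ i) * (V * Vᵀ) := by
            simp only [Matrix.mul_assoc]
        _ = Vᵀ * Matrix.diagonal (fun i => σ i * σ i) := by rw [hV, Matrix.mul_one]
    have h1 : (Aᵀ * A) *ᵥ x = (Vᵀ * Matrix.diagonal (fun i => σ i * σ i)) *ᵥ e := by
      rw [hAtA, hx, Matrix.mulVec_mulVec, hmm]
    rw [h1, hx, Matrix.mulVec_transpose, Matrix.dotProduct_mulVec,
      Matrix.vecMul_vecMul, ← Matrix.mul_assoc, hV, Matrix.one_mul]
    rw [show (e ᵥ* Matrix.diagonal fun i => σ i * σ i) ⬝ᵥ e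
        = ∑ k, e k * (σ k * σ k) * e k from by
      simp [dotProduct, Matrix.vecMul_diagonal]]
    rw [Finset.sum_eq_single i0]
    · simp [he]
    · intro b _ hb; simp [he, Pi.single_eq_of_ne hb]
    · simp
  -- quadratic form of W at x
  have hxWx : x ⬝ᵥ (W *ᵥ x) = β * (∑ j, x j) * (∑ j, x j) + x ⬝ᵥ ((Aᵀ * A) *ᵥ x) := by
    have h1 : ∀ i, (W *ᵥ x) i = β * (∑ j, x j) + ((Aᵀ * A) *ᵥ x) i := by
      intro i
      simp only [Matrix.mulVec, dotProduct, hWent, add_mul,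
        Finset.sum_add_distrib, Finset.mul_sum]
    have h2 : ∑ i, x i * (β * (∑ j, x j)) = β * (∑ j, x j) * (∑ j, x j) := by
      rw [← Finset.sum_mul]; ring
    calc x ⬝ᵥ (W *ᵥ x) = ∑ i, x i * (β * (∑ j, x j) + ((Aᵀ * A) *ᵥ x) i) := by
          simp only [dotProduct, h1]
      _ = β * (∑ j, x j) * (∑ j, x j) + x ⬝ᵥ ((Aᵀ * A) *ᵥ x) := by
          simp only [dotProduct, mul_add, Finset.sum_add_distrib, h2]
  -- put it together
  have hpsd := hL.dotProduct_mulVec_nonneg x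
  have hstar : star x = x := by simp
  rw [hstar, Matrix.sub_mulVec, dotProduct_sub, Matrix.smul_mulVec,
    Matrix.one_mulVec, dotProduct_smul, hxx, ← hW, hxWx, hxAx] at hpsd
  simp only [smul_eq_mul, mul_one] at hpsd
  have hS := mul_self_nonneg (∑ j, x j)
  have hb : 0 ≤ β * ((∑ j, x j) * (∑ j, x j)) := mul_nonneg hβ0 hS
  nlinarith [hpsd, hb]
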